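/- Let ℓ : Δⁿ → ℝ₊ⁿ be a loss function (Δⁿ the relative interior of the probability simplex in ℝⁿ) with superprediction set S = ℓ(Δⁿ) + ℝ₊ⁿ. Then ℓ is proper (i.e., ⟨ℓ(q), q⟩ ≤ ⟨ℓ(p), q⟩ for all p, q ∈ Δⁿ) if and only if for every p ∈ Δⁿ, ℓ(p) is a supergradient at p of the concave support function ρ of cl conv(S), where ρ(x) = inf{⟨s, x⟩ | s ∈ cl conv(S)}. -/

import Mathlib

open Pointwise InnerProductSpace

/-- A loss `ℓ : Δⁿ → ℝ₊ⁿ` with superprediction set `S = ℓ(Δⁿ) + ℝ₊ⁿ` is proper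
(`⟪ℓ q, q⟫ ≤ ⟪ℓ p, q⟫` for all `p, q ∈ Δⁿ`) iff for every `p ∈ Δⁿ`, `ℓ p` is a
supergradient at `p` of the concave support function `ρ` of `cl conv S`. -/
theorem proper_iff_supergradient_of_concave_support
    (n : ℕ) (ℓ : EuclideanSpace ℝ (Fin n) → EuclideanSpace ℝ (Fin n))
    (Δ : Set (EuclideanSpace ℝ (Fin n)))
    (hΔ : Δ = {p | (∀ i, 0 < p i) ∧ ∑ i, p i = 1})
    (hℓ : ∀ p ∈ Δ, ∀ i, 0 ≤ ℓ p i)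
    (S : Set (EuclideanSpace ℝ (Fin n)))
    (hS : S = ℓ '' Δ + {x | ∀ i, 0 ≤ x i})
    (ρ : EuclideanSpace ℝ (Fin n) → EReal)
    (hρ : ∀ x, ρ x = ⨅ s ∈ closure (convexHull ℝ S), ((⟪s, x⟫_ℝ : ℝ) : EReal)) :
    (∀ p ∈ Δ, ∀ q ∈ Δ, ⟪ℓ q, q⟫_ℝ ≤ ⟪ℓ p, q⟫_ℝ) ↔
      (∀ p ∈ Δ, ∀ q : EuclideanSpace ℝ (Fin n),
        ρ q - ρ p ≤ ((⟪ℓ p, q - p⟫_ℝ : ℝ) : EReal)) := by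
  -- ℓ p belongs to S, hence to the closed convex hull of S.
  have hmemS : ∀ p ∈ Δ, ℓ p ∈ S := by
    intro p hp
    rw [hS]
    have h0 : (0 : EuclideanSpace ℝ (Fin n)) ∈ {x : EuclideanSpace ℝ (Fin n) | ∀ i, 0 ≤ x i} :=
      fun i => le_refl 0
    have := Set.add_mem_add (Set.mem_image_of_mem ℓ hp) h0
    simpa using this
  have hmemC : ∀ p ∈ Δ, ℓ p ∈ closure (convexHull ℝ S) := fun p hp =>
    subset_closure (subset_convexHull ℝ S (hmemS p hp))
  -- Upper bound on ρ from membership.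
  have hub : ∀ p ∈ Δ, ∀ x, ρ x ≤ ((⟪ℓ p, x⟫_ℝ : ℝ) : EReal) := by
    intro p hp x
    rw [hρ]
    exact iInf₂_le (ℓ p) (hmemC p hp)
  -- Lower bound on ρ from a halfspace containing S.
  have hlb : ∀ (p : EuclideanSpace ℝ (Fin n)) (c : ℝ), (∀ s ∈ S, c ≤ ⟪s, p⟫_ℝ) →
      ((c : ℝ) : EReal) ≤ ρ p := by
    intro p c hc
    rw [hρ]
    refine le_iInf₂ fun s hs => EReal.coe_le_coe_iff.mpr ?_
    have hlin : IsLinearMap ℝ (fun x : EuclideanSpace ℝ (Fin n) => ⟪x, p⟫_ℝ) :=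
      ⟨fun x y => inner_add_left x y p, fun r x => real_inner_smul_left x p r⟩
    have hT : closure (convexHull ℝ S) ⊆ {x : EuclideanSpace ℝ (Fin n) | c ≤ ⟪x, p⟫_ℝ} := by
      apply closure_minimal
      · exact convexHull_min hc (convex_halfSpace_ge hlin c)
      · exact isClosed_le continuous_const (Continuous.inner continuous_id continuous_const)
    exact hT hs
  constructor
  · -- proper → supergradient
    intro hprop p hp q
    -- ρ p = ⟪ℓ p, p⟫
    have hge : ((⟪ℓ p, p⟫_ℝ : ℝ) : EReal) ≤ ρ p := by
      refine hlb p _ ?_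
      intro s hs
      rw [hS] at hs
      obtain ⟨a, ⟨q', hq', rfl⟩, r, hr, rfl⟩ := hs
      have h1 := hprop q' hq' p hp
      have h2 : 0 ≤ ⟪r, p⟫_ℝ := by
        rw [PiLp.inner_apply]
        refine Finset.sum_nonneg fun i _ => ?_
        have hpk : (0:ℝ) ≤ p i := le_of_lt ((hΔ ▸ hp).1 i)
        simpa using mul_nonneg hpk (hr i)
      have h3 : ⟪ℓ q' + r, p⟫_ℝ = ⟪ℓ q', p⟫_ℝ + ⟪r, p⟫_ℝ := inner_add_left _ _ _
      rw [h3]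
      linarith
    have hρp : ρ p = ((⟪ℓ p, p⟫_ℝ : ℝ) : EReal) := le_antisymm (hub p hp p) hge
    rw [hρp]
    refine le_trans (EReal.sub_le_sub (hub p hp q) le_rfl) ?_
    rw [← EReal.coe_sub]
    apply le_of_eq
    rw [EReal.coe_eq_coe_iff, inner_sub_right]
  · -- supergradient → proper
    intro h
    have key : ∀ r ∈ Δ, ρ r = ((⟪ℓ r, r⟫_ℝ : ℝ) : EReal) := by
      intro r hr
      have hle := hub r hr r
      have h0 : ρ 0 = 0 := by
        rw [hρ]
        apply le_antisymm
        · refine le_trans (iInf₂_le (ℓ r) (hmemC r hr)) ?_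
          simp
        · exact le_iInf₂ fun s hs => by simp
      have hh := h r hr 0
      rw [h0] at hh
      have hnetop : ρ r ≠ ⊤ := ne_top_of_le_ne_top (EReal.coe_ne_top _) hle
      have hnebot : ρ r ≠ ⊥ := by
        intro hb
        rw [hb] at hh
        simp at hh
      obtain ⟨x, hx⟩ : ∃ x : ℝ, ρ r = (x : EReal) :=
        ⟨(ρ r).toReal, (EReal.coe_toReal hnetop hnebot).symm⟩
      rw [hx] at hh hle ⊢
      have hinner : ⟪ℓ r, (0 : EuclideanSpace ℝ (Fin n)) - r⟫_ℝ = -⟪ℓ r, r⟫_ℝ := by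
        rw [zero_sub, inner_neg_right]
      rw [hinner] at hh
      have hh' : ((0 - x : ℝ) : EReal) ≤ ((-⟪ℓ r, r⟫_ℝ : ℝ) : EReal) := by
        rw [EReal.coe_sub]
        exact_mod_cast hh
      have hh'' : (0 : ℝ) - x ≤ -⟪ℓ r, r⟫_ℝ := EReal.coe_le_coe_iff.mp hh'
      have hle' : x ≤ ⟪ℓ r, r⟫_ℝ := EReal.coe_le_coe_iff.mp hle
      have : x = ⟪ℓ r, r⟫_ℝ := by linarith
      rw [this]
    intro p hp q hq
    have hh := h p hp q
    rw [key p hp, key q hq, ← EReal.coe_sub] at hh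
    have := EReal.coe_le_coe_iff.mp hh
    rw [inner_sub_right] at this
    linarith
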